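/- Let 0 < δ < α ≤ 1, let n, d be positive integers with α·n an integer, let x_1, …, x_n ∈ ℝ^d with labels y_1, …, y_n ∈ ℝ, let ℓ* ∈ ℝ^d, and let I ⊆ {1, …, n} with |I| = α·n and y_i = ⟨x_i, ℓ*⟩ for all i ∈ I. Assume for every nonzero v ∈ ℝ^d that |{i ∈ I : ⟨x_i, v⟩ = 0}| < δ·|I|. Let 𝒞 = {S ⊆ {1, …, n} : |S| = α·n and there exists ℓ ∈ ℝ^d with y_i = ⟨x_i, ℓ⟩ for all i ∈ S} (so I ∈ 𝒞), and let μ be a probability distribution on 𝒞 minimizing ∑_{i=1}^n Pr_{S∼μ}[i ∈ S]² among all probability distributions on 𝒞. Let k = ⌈20/(α−δ)⌉ and let S_1, …, S_k be drawn independently from μ. Then with probability at least 0.99, there exists j ≤ k such that every ℓ ∈ ℝ^d satisfying y_i = ⟨x_i, ℓ⟩ for all i ∈ S_j equals ℓ*. -/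

import Mathlib

open scoped Classical

set_option maxHeartbeats 1000000

theorem stmt_2 (α δ : ℝ) (hδ0 : 0 < δ) (hδα : δ < α) (hα1 : α ≤ 1)
    (n d m : ℕ) (hn : 0 < n) (hd : 0 < d) (hm : (m : ℝ) = α * n)
    (x : Fin n → EuclideanSpace ℝ (Fin d)) (y : Fin n → ℝ)
    (ℓstar : EuclideanSpace ℝ (Fin d))
    (I : Finset (Fin n)) (hIcard : I.card = m)
    (hIy : ∀ i ∈ I, y i = (inner ℝ (x i) ℓstar : ℝ))
    (hAC : ∀ v : EuclideanSpace ℝ (Fin d), v ≠ 0 →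
      ((I.filter (fun i => (inner ℝ (x i) v : ℝ) = 0)).card : ℝ) < δ * I.card)
    (𝒞 : Finset (Finset (Fin n)))
    (h𝒞 : ∀ S : Finset (Fin n), S ∈ 𝒞 ↔
      (S.card = m ∧ ∃ ℓ : EuclideanSpace ℝ (Fin d), ∀ i ∈ S, y i = (inner ℝ (x i) ℓ : ℝ)))
    (μ : Finset (Fin n) → ℝ) (hμ0 : ∀ S ∈ 𝒞, 0 ≤ μ S)
    (hμ1 : ∑ S ∈ 𝒞, μ S = 1)
    (hmin : ∀ ν : Finset (Fin n) → ℝ, (∀ S ∈ 𝒞, 0 ≤ ν S) → (∑ S ∈ 𝒞, ν S) = 1 →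
      ∑ i : Fin n, (∑ S ∈ 𝒞.filter (fun S => i ∈ S), μ S) ^ 2 ≤
        ∑ i : Fin n, (∑ S ∈ 𝒞.filter (fun S => i ∈ S), ν S) ^ 2) :
    0.99 ≤ ∑ f ∈ Fintype.piFinset (fun _ : Fin ⌈20 / (α - δ)⌉₊ => 𝒞),
      (if ∃ j : Fin ⌈20 / (α - δ)⌉₊,
          ∀ ℓ : EuclideanSpace ℝ (Fin d), (∀ i ∈ f j, y i = (inner ℝ (x i) ℓ : ℝ)) → ℓ = ℓstar
        then ∏ j : Fin ⌈20 / (α - δ)⌉₊, μ (f j) else 0) := by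
  set k := ⌈20 / (α - δ)⌉₊ with hk
  have hε0 : (0:ℝ) < α - δ := by linarith
  have hε1 : α - δ < 1 := by linarith
  have hnpos : (0:ℝ) < (n:ℝ) := by exact_mod_cast hn
  have hmpos : (0:ℝ) < (m:ℝ) := by
    rw [hm]; exact mul_pos (by linarith) hnpos
  have hI𝒞 : I ∈ 𝒞 := (h𝒞 I).2 ⟨hIcard, ℓstar, hIy⟩
  set p : Fin n → ℝ := fun i => ∑ S ∈ 𝒞.filter (fun S => i ∈ S), μ S with hp
  have hp0 : ∀ i, 0 ≤ p i := fun i =>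
    Finset.sum_nonneg fun S hS => hμ0 S (Finset.mem_filter.1 hS).1
  -- generic swap: for any T, ∑ i ∈ T, p i = ∑ S ∈ 𝒞, ((T ∩ S).card : ℝ) * μ S
  have hswap : ∀ T : Finset (Fin n),
      ∑ i ∈ T, p i = ∑ S ∈ 𝒞, ((T ∩ S).card : ℝ) * μ S := by
    intro T
    simp only [hp, Finset.sum_filter]
    rw [Finset.sum_comm]
    refine Finset.sum_congr rfl fun S _ => ?_
    rw [Finset.sum_ite_mem, Finset.sum_const, nsmul_eq_mul]
  have hcard : ∀ S ∈ 𝒞, S.card = m := fun S hS => ((h𝒞 S).1 hS).1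
  have hsump : ∑ i, p i = (m : ℝ) := by
    have := hswap Finset.univ
    simp only [Finset.univ_inter] at this
    rw [Finset.sum_congr rfl fun i _ => rfl, this]
    rw [Finset.sum_congr rfl (fun S hS => by rw [hcard S hS]), ← Finset.mul_sum, hμ1, mul_one]
  -- Cauchy-Schwarz
  have hCS : (m:ℝ) * α ≤ ∑ i, p i ^ 2 := by
    have h := sq_sum_le_card_mul_sum_sq (s := Finset.univ) (f := p)
    rw [hsump] at h
    simp only [Finset.card_univ, Fintype.card_fin] at h
    have : (m:ℝ)^2 = (m:ℝ) * α * n := by rw [hm]; ring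
    rw [this] at h
    exact le_of_mul_le_mul_right (by linarith [h]) hnpos
  -- perturbation argument
  set t : Fin n → ℝ := fun i => if i ∈ I then 1 else 0 with ht
  set A : ℝ := ∑ i, p i * (t i - p i) with hA
  set B : ℝ := ∑ i, (t i - p i) ^ 2 with hB
  have hkey : ∀ ε : ℝ, 0 < ε → ε ≤ 1 → 0 ≤ 2 * A + ε * B := by
    intro ε hε hε1'
    set ν : Finset (Fin n) → ℝ := fun S => (1 - ε) * μ S + ε * (if S = I then 1 else 0) with hν
    have hν0 : ∀ S ∈ 𝒞, 0 ≤ ν S := by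
      intro S hS
      have h0 := hμ0 S hS
      by_cases h : S = I
      · subst h; simp only [hν, if_pos rfl, if_true]; nlinarith
      · simp only [hν, if_neg h, mul_zero, add_zero]; nlinarith
    have hν1 : ∑ S ∈ 𝒞, ν S = 1 := by
      simp only [hν]
      rw [Finset.sum_add_distrib, ← Finset.mul_sum, ← Finset.mul_sum, hμ1,
        Finset.sum_ite_eq' 𝒞 I (fun _ => (1:ℝ)), if_pos hI𝒞]
      ring
    have hq : ∀ i, ∑ S ∈ 𝒞.filter (fun S => i ∈ S), ν S = (1 - ε) * p i + ε * t i := by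
      intro i
      simp only [hν]
      rw [Finset.sum_add_distrib, ← Finset.mul_sum, ← Finset.mul_sum,
        Finset.sum_ite_eq' _ I (fun _ => (1:ℝ))]
      have : I ∈ 𝒞.filter (fun S => i ∈ S) ↔ i ∈ I := by
        simp [Finset.mem_filter, hI𝒞]
      simp only [ht, hp]
      by_cases h : i ∈ I <;> simp [this, h]
    have h := hmin ν hν0 hν1
    simp only [hq] at h
    have hexp : ∀ i : Fin n, ((1 - ε) * p i + ε * t i) ^ 2
        = p i ^ 2 + ε * (2 * (p i * (t i - p i))) + ε ^ 2 * (t i - p i) ^ 2 := by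
      intro i; ring
    rw [Finset.sum_congr rfl fun i _ => hexp i] at h
    rw [Finset.sum_add_distrib, Finset.sum_add_distrib, ← Finset.mul_sum, ← Finset.mul_sum] at h
    have h2 : 0 ≤ ε * (2 * A) + ε ^ 2 * B := by
      simp only [hA, hB, Finset.mul_sum] at *
      linarith [h]
    nlinarith [h2]
  have hApos : 0 ≤ A := by
    have hB0 : 0 ≤ B := Finset.sum_nonneg fun i _ => sq_nonneg _
    by_contra hneg
    push_neg at hneg
    rcases eq_or_lt_of_le hB0 with hBeq | hBlt
    · have := hkey 1 one_pos le_rfl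
      rw [← hBeq] at this
      linarith
    · have hε : 0 < min 1 (-A / B) := by
        exact lt_min one_pos (div_pos (by linarith) hBlt)
      have h := hkey _ hε (min_le_left _ _)
      have : min 1 (-A / B) * B ≤ (-A / B) * B :=
        mul_le_mul_of_nonneg_right (min_le_right _ _) hB0
      rw [div_mul_cancel₀ _ (ne_of_gt hBlt)] at this
      linarith
  -- lower bound on ∑_{i ∈ I} p i
  have hpt : ∑ i, p i * t i = ∑ i ∈ I, p i := by
    simp only [ht, mul_ite, mul_one, mul_zero]
    rw [Finset.sum_ite_mem, Finset.univ_inter]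
  have hIsum : (m:ℝ) * α ≤ ∑ i ∈ I, p i := by
    have : ∑ i, p i * (t i - p i) = ∑ i, p i * t i - ∑ i, p i ^ 2 := by
      rw [← Finset.sum_sub_distrib]
      exact Finset.sum_congr rfl fun i _ => by ring
    rw [hA, this, hpt] at hApos
    linarith [hCS]
  -- good sets
  set G := 𝒞.filter (fun S => δ * m ≤ ((I ∩ S).card : ℝ)) with hG
  set g := ∑ S ∈ G, μ S with hg
  have hg0 : 0 ≤ g := Finset.sum_nonneg fun S hS => hμ0 S (Finset.mem_filter.1 hS).1
  have hglb : α - δ ≤ g := by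
    have h1 : ∑ i ∈ I, p i = ∑ S ∈ 𝒞, ((I ∩ S).card : ℝ) * μ S := hswap I
    have hsplit := Finset.sum_filter_add_sum_filter_not 𝒞
      (fun S => δ * m ≤ ((I ∩ S).card : ℝ)) (fun S => ((I ∩ S).card : ℝ) * μ S)
    have hGle : ∑ S ∈ G, ((I ∩ S).card : ℝ) * μ S ≤ (m:ℝ) * g := by
      rw [hg, Finset.mul_sum]
      refine Finset.sum_le_sum fun S hS => ?_
      have hμS := hμ0 S (Finset.mem_filter.1 hS).1
      have : ((I ∩ S).card : ℝ) ≤ (m:ℝ) := by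
        have := Finset.card_le_card (Finset.inter_subset_left (s₁ := I) (s₂ := S))
        rw [hIcard] at this
        exact_mod_cast this
      exact mul_le_mul_of_nonneg_right this hμS
    have hBle : ∑ S ∈ 𝒞.filter (fun S => ¬ δ * m ≤ ((I ∩ S).card : ℝ)),
        ((I ∩ S).card : ℝ) * μ S ≤ δ * m * (1 - g) := by
      have hrest : ∑ S ∈ 𝒞.filter (fun S => ¬ δ * m ≤ ((I ∩ S).card : ℝ)), μ S = 1 - g := by
        have := Finset.sum_filter_add_sum_filter_not 𝒞
          (fun S => δ * m ≤ ((I ∩ S).card : ℝ)) μ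
        rw [hμ1] at this
        rw [hg, hG]; linarith
      rw [← hrest, Finset.mul_sum]
      refine Finset.sum_le_sum fun S hS => ?_
      obtain ⟨hS𝒞, hSbad⟩ := Finset.mem_filter.1 hS
      push_neg at hSbad
      exact mul_le_mul_of_nonneg_right hSbad.le (hμ0 S hS𝒞)
    have hmain : (m:ℝ) * α ≤ (m:ℝ) * g + δ * m * (1 - g) := by
      calc (m:ℝ) * α ≤ ∑ i ∈ I, p i := hIsum
        _ = ∑ S ∈ 𝒞, ((I ∩ S).card : ℝ) * μ S := h1
        _ ≤ (m:ℝ) * g + δ * m * (1 - g) := by rw [← hsplit]; exact add_le_add hGle hBle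
    have : α ≤ g + δ * (1 - g) := by
      have := hmain
      nlinarith [hmpos]
    nlinarith [hg0, hδ0]
  -- good sets determine ℓstar
  have huniq : ∀ S ∈ G, ∀ ℓ : EuclideanSpace ℝ (Fin d),
      (∀ i ∈ S, y i = (inner ℝ (x i) ℓ : ℝ)) → ℓ = ℓstar := by
    intro S hS ℓ hℓ
    by_contra hne
    obtain ⟨hS𝒞, hSgood⟩ := Finset.mem_filter.1 hS
    have h1 := hAC (ℓ - ℓstar) (sub_ne_zero.2 hne)
    rw [hIcard] at h1
    have hsub : I ∩ S ⊆ I.filter (fun i => (inner ℝ (x i) (ℓ - ℓstar) : ℝ) = 0) := by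
      intro i hi
      obtain ⟨hiI, hiS⟩ := Finset.mem_inter.1 hi
      rw [Finset.mem_filter]
      refine ⟨hiI, ?_⟩
      rw [inner_sub_right]
      have h1 := hIy i hiI
      have h2 := hℓ i hiS
      linarith
    have := Finset.card_le_card hsub
    have : ((I ∩ S).card : ℝ) ≤ ((I.filter (fun i => (inner ℝ (x i) (ℓ - ℓstar) : ℝ) = 0)).card : ℝ) := by
      exact_mod_cast this
    linarith
  -- bad sets
  set P : Finset (Fin n) → Prop := fun S => ∀ ℓ : EuclideanSpace ℝ (Fin d),
    (∀ i ∈ S, y i = (inner ℝ (x i) ℓ : ℝ)) → ℓ = ℓstar with hP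
  set Bad := 𝒞.filter (fun S => ¬ P S) with hBad
  set b := ∑ S ∈ Bad, μ S with hb
  have hb0 : 0 ≤ b := Finset.sum_nonneg fun S hS => hμ0 S (Finset.mem_filter.1 hS).1
  have hbub : b ≤ 1 - (α - δ) := by
    have hGsub : G ⊆ 𝒞.filter P := by
      intro S hS
      exact Finset.mem_filter.2 ⟨(Finset.mem_filter.1 hS).1, huniq S hS⟩
    have hgood : g ≤ ∑ S ∈ 𝒞.filter P, μ S :=
      Finset.sum_le_sum_of_subset_of_nonneg hGsub
        (fun S hS _ => hμ0 S (Finset.mem_filter.1 hS).1)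
    have hsplit := Finset.sum_filter_add_sum_filter_not 𝒞 P μ
    rw [hμ1] at hsplit
    rw [hb, hBad]
    linarith
  -- rewrite the big sum
  have hX1 : ∑ f ∈ Fintype.piFinset (fun _ : Fin k => 𝒞), ∏ j : Fin k, μ (f j) = 1 := by
    rw [← Finset.prod_univ_sum]
    simp [hμ1]
  have hX2 : ∑ f ∈ Fintype.piFinset (fun _ : Fin k => 𝒞),
      (if ¬ ∃ j : Fin k, P (f j) then ∏ j : Fin k, μ (f j) else 0) = b ^ k := by
    rw [← Finset.sum_filter]
    have hset : (Fintype.piFinset (fun _ : Fin k => 𝒞)).filter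
        (fun f => ¬ ∃ j : Fin k, P (f j)) = Fintype.piFinset (fun _ : Fin k => Bad) := by
      ext f
      simp only [Finset.mem_filter, Fintype.mem_piFinset, hBad, Finset.mem_filter, not_exists]
      constructor
      · rintro ⟨h1, h2⟩ j; exact ⟨h1 j, h2 j⟩
      · intro h; exact ⟨fun j => (h j).1, fun j => (h j).2⟩
    rw [hset, ← Finset.prod_univ_sum]
    simp [← hb]
  have hsplitP : ∀ f : Fin k → Finset (Fin n),
      (if ∃ j : Fin k, P (f j) then ∏ j : Fin k, μ (f j) else 0)
      = (∏ j : Fin k, μ (f j)) - (if ¬ ∃ j : Fin k, P (f j) then ∏ j : Fin k, μ (f j) else 0) := by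
    intro f
    by_cases h : ∃ j : Fin k, P (f j) <;> simp [h]
  calc (0.99 : ℝ) ≤ 1 - b ^ k := by
        have hpow : b ^ k ≤ (1 - (α - δ)) ^ k := pow_le_pow_left₀ hb0 hbub k
        have hexp : (1 - (α - δ)) ^ k ≤ Real.exp (-(α - δ)) ^ k := by
          apply pow_le_pow_left₀ (by linarith)
          linarith [Real.add_one_le_exp (-(α - δ))]
        rw [← Real.exp_nat_mul] at hexp
        have h20 : (20 : ℝ) ≤ (α - δ) * k := by
          have hceil : (20 / (α - δ) : ℝ) ≤ (k : ℝ) := Nat.le_ceil _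
          calc (20:ℝ) = (α - δ) * (20 / (α - δ)) := by field_simp
            _ ≤ (α - δ) * k := by exact mul_le_mul_of_nonneg_left hceil hε0.le
        have hexp2 : Real.exp ((k : ℝ) * -(α - δ)) ≤ Real.exp (-20) := by
          apply Real.exp_le_exp.2
          nlinarith [h20]
        have hfinal : Real.exp (-20 : ℝ) ≤ 0.01 := by
          rw [Real.exp_neg]
          rw [inv_le_iff_one_le_mul₀ (Real.exp_pos _)]
          have h10 : (11:ℝ) ≤ Real.exp 10 := by linarith [Real.add_one_le_exp (10:ℝ)]
          have : (121:ℝ) ≤ Real.exp 20 := by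
            have : Real.exp 20 = Real.exp 10 * Real.exp 10 := by
              rw [← Real.exp_add]; norm_num
            nlinarith [Real.exp_pos (10:ℝ)]
          nlinarith
        nlinarith [hpow, hexp, hexp2, hfinal]
    _ ≤ ∑ f ∈ Fintype.piFinset (fun _ : Fin k => 𝒞),
        (if ∃ j : Fin k, P (f j) then ∏ j : Fin k, μ (f j) else 0) := by
        rw [Finset.sum_congr rfl fun f _ => hsplitP f, Finset.sum_sub_distrib, hX1, hX2]
    _ = _ := by rfl
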